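/- Let P, Q be commuting positive definite real symmetric n×n matrices. Then the limit as β → 0 of tr[(1/(β−1))·(P^β − P·Q^(β−1)) − (1/β)·(P^β − Q^β)] equals tr[log Q − log P + P·Q⁻¹ − I] (the Burg matrix divergence). -/

import Mathlib

open Filter Topology Matrix

/-- Matrix power of a Hermitian (symmetric) real matrix via spectral decomposition. -/
noncomputable def mpow {m : ℕ} (A : Matrix (Fin m) (Fin m) ℝ) (c : ℝ) :
    Matrix (Fin m) (Fin m) ℝ :=
  if hA : A.IsHermitian then
    (hA.eigenvectorUnitary : Matrix (Fin m) (Fin m) ℝ) *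
      Matrix.diagonal (fun i => hA.eigenvalues i ^ c) *
      star (hA.eigenvectorUnitary : Matrix (Fin m) (Fin m) ℝ)
  else 0

/-- Matrix logarithm of a Hermitian (symmetric) real matrix via spectral decomposition. -/
noncomputable def mlog {m : ℕ} (A : Matrix (Fin m) (Fin m) ℝ) :
    Matrix (Fin m) (Fin m) ℝ :=
  if hA : A.IsHermitian then
    (hA.eigenvectorUnitary : Matrix (Fin m) (Fin m) ℝ) *
      Matrix.diagonal (fun i => Real.log (hA.eigenvalues i)) *
      star (hA.eigenvectorUnitary : Matrix (Fin m) (Fin m) ℝ)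
  else 0

section aux

variable {m : ℕ} {A : Matrix (Fin m) (Fin m) ℝ}

lemma trace_conj (hA : A.IsHermitian) (f : Fin m → ℝ) :
    ((hA.eigenvectorUnitary : Matrix (Fin m) (Fin m) ℝ) * Matrix.diagonal f *
      star (hA.eigenvectorUnitary : Matrix (Fin m) (Fin m) ℝ)).trace = ∑ i, f i := by
  rw [Matrix.trace_mul_cycle,
    Matrix.mem_unitaryGroup_iff'.mp hA.eigenvectorUnitary.2, one_mul, Matrix.trace_diagonal]

lemma trace_mpow (hA : A.IsHermitian) (c : ℝ) :
    (mpow A c).trace = ∑ i, hA.eigenvalues i ^ c := by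
  rw [mpow, dif_pos hA, trace_conj]

lemma trace_mlog (hA : A.IsHermitian) :
    (mlog A).trace = ∑ i, Real.log (hA.eigenvalues i) := by
  rw [mlog, dif_pos hA, trace_conj]

lemma mpow_zero (hA : A.IsHermitian) : mpow A 0 = 1 := by
  rw [mpow, dif_pos hA]
  simp only [Real.rpow_zero, Matrix.diagonal_one, mul_one]
  exact Matrix.mem_unitaryGroup_iff.mp hA.eigenvectorUnitary.2

lemma mpow_neg_one (hA : A.PosDef) : mpow A (-1) = A⁻¹ := by
  symm
  apply Matrix.inv_eq_right_inv
  rw [mpow, dif_pos hA.1]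
  nth_rewrite 1 [hA.1.spectral_theorem]
  have h1 : star (hA.1.eigenvectorUnitary : Matrix (Fin m) (Fin m) ℝ) *
      (hA.1.eigenvectorUnitary : Matrix (Fin m) (Fin m) ℝ) = 1 :=
    Matrix.mem_unitaryGroup_iff'.mp hA.1.eigenvectorUnitary.2
  have h2 : (hA.1.eigenvectorUnitary : Matrix (Fin m) (Fin m) ℝ) *
      star (hA.1.eigenvectorUnitary : Matrix (Fin m) (Fin m) ℝ) = 1 :=
    Matrix.mem_unitaryGroup_iff.mp hA.1.eigenvectorUnitary.2
  calc (hA.1.eigenvectorUnitary : Matrix (Fin m) (Fin m) ℝ) *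
        Matrix.diagonal (RCLike.ofReal ∘ hA.1.eigenvalues) *
        star (hA.1.eigenvectorUnitary : Matrix (Fin m) (Fin m) ℝ) *
        ((hA.1.eigenvectorUnitary : Matrix (Fin m) (Fin m) ℝ) *
          Matrix.diagonal (fun i => hA.1.eigenvalues i ^ (-1 : ℝ)) *
          star (hA.1.eigenvectorUnitary : Matrix (Fin m) (Fin m) ℝ))
      = (hA.1.eigenvectorUnitary : Matrix (Fin m) (Fin m) ℝ) *
        (Matrix.diagonal (RCLike.ofReal ∘ hA.1.eigenvalues) *
          Matrix.diagonal (fun i => hA.1.eigenvalues i ^ (-1 : ℝ))) *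
        star (hA.1.eigenvectorUnitary : Matrix (Fin m) (Fin m) ℝ) := by
        simp only [mul_assoc]
        congr 2
        rw [← mul_assoc, h1, one_mul]
    _ = 1 := by
        rw [Matrix.diagonal_mul_diagonal]
        have : (fun i => (RCLike.ofReal ∘ hA.1.eigenvalues) i *
            hA.1.eigenvalues i ^ (-1 : ℝ)) = fun _ => (1 : ℝ) := by
          funext i
          simp only [Function.comp_apply, RCLike.ofReal_real_eq_id, id_eq,
            Real.rpow_neg_one]
          exact mul_inv_cancel₀ (hA.eigenvalues_pos i).ne'
        rw [this, Matrix.diagonal_one, mul_one, h2]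

lemma continuous_mpow (hA : A.IsHermitian) (hpos : ∀ i, hA.eigenvalues i ≠ 0) :
    Continuous (fun c : ℝ => mpow A c) := by
  simp only [mpow, dif_pos hA]
  refine (continuous_const.matrix_mul ?_).matrix_mul continuous_const
  refine Continuous.matrix_diagonal ?_
  refine continuous_pi fun i => ?_
  exact continuous_iff_continuousAt.mpr fun b =>
    Real.continuousAt_const_rpow (hpos i)

end aux

theorem beta_matrix_divergence_tendsto_burg {n : ℕ}
    (P Q : Matrix (Fin n) (Fin n) ℝ) (hP : P.PosDef) (hQ : Q.PosDef)
    (hPQ : Commute P Q) :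
    Tendsto (fun β : ℝ =>
        ((1 / (β - 1)) • (mpow P β - P * mpow Q (β - 1)) -
          (1 / β) • (mpow P β - mpow Q β)).trace)
      (𝓝[≠] 0) (𝓝 ((mlog Q - mlog P + P * Q⁻¹ - 1).trace)) := by
  have hPe := fun i => (hP.eigenvalues_pos i)
  have hQe := fun i => (hQ.eigenvalues_pos i)
  -- part 1 : continuous part
  have h1 : Tendsto (fun β : ℝ => (1 / (β - 1)) * ((mpow P β).trace -
      (P * mpow Q (β - 1)).trace)) (𝓝[≠] 0)
      (𝓝 ((P * Q⁻¹).trace - (n : ℝ))) := by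
    have hc : ContinuousAt (fun β : ℝ => (1 / (β - 1)) * ((mpow P β).trace -
        (P * mpow Q (β - 1)).trace)) 0 := by
      have cP : Continuous fun β : ℝ => (mpow P β).trace :=
        ((continuous_mpow hP.1 fun i => (hPe i).ne').matrix_trace)
      have cQ : Continuous fun β : ℝ => (P * mpow Q (β - 1)).trace :=
        ((continuous_const.matrix_mul
          ((continuous_mpow hQ.1 fun i => (hQe i).ne').comp
            (continuous_id.sub continuous_const))).matrix_trace)
      exact ((continuousAt_const.div ((continuous_id.sub continuous_const).continuousAt)
        (by norm_num)).mul ((cP.sub cQ).continuousAt))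
    refine Tendsto.mono_left ?_ nhdsWithin_le_nhds
    convert hc.tendsto using 2
    rw [zero_sub, mpow_zero hP.1, mpow_neg_one hQ, Matrix.trace_one]
    simp
  -- part 2 : derivative part
  have h2 : Tendsto (fun β : ℝ => (1 / β) * ((mpow P β).trace - (mpow Q β).trace))
      (𝓝[≠] 0) (𝓝 ((mlog P).trace - (mlog Q).trace)) := by
    have hd : HasDerivAt (fun β : ℝ => (mpow P β).trace - (mpow Q β).trace)
        ((mlog P).trace - (mlog Q).trace) 0 := by
      have dP : HasDerivAt (fun β : ℝ => (mpow P β).trace)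
          ((mlog P).trace) 0 := by
        simp only [trace_mpow hP.1, trace_mlog hP.1]
        have := HasDerivAt.fun_sum (u := Finset.univ)
          (fun i _ => (Real.hasStrictDerivAt_const_rpow (hPe i) 0).hasDerivAt)
        simpa using this
      have dQ : HasDerivAt (fun β : ℝ => (mpow Q β).trace)
          ((mlog Q).trace) 0 := by
        simp only [trace_mpow hQ.1, trace_mlog hQ.1]
        have := HasDerivAt.fun_sum (u := Finset.univ)
          (fun i _ => (Real.hasStrictDerivAt_const_rpow (hQe i) 0).hasDerivAt)
        simpa using this
      exact dP.sub dQ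
    have := hasDerivAt_iff_tendsto_slope.mp hd
    refine this.congr fun β => ?_
    simp only [slope, trace_mpow hP.1, trace_mpow hQ.1, mpow_zero, vsub_eq_sub,
      sub_zero, smul_eq_mul]
    simp [Real.rpow_zero]
  have := h1.sub h2
  convert this using 2 with β
  · rw [Matrix.trace_sub, Matrix.trace_smul, Matrix.trace_smul, Matrix.trace_sub,
      Matrix.trace_sub, smul_eq_mul, smul_eq_mul]
  · rw [Matrix.trace_sub, Matrix.trace_add, Matrix.trace_sub, Matrix.trace_one, Fintype.card_fin]
    ring
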